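/- Let n ≥ 2 be an integer and let S be a finite set of primes. Let a_1, …, a_{n−1} be integers such that: a_1 is coprime to n, a_1 is divisible by n−1 and by every prime in S that does not divide n; and for each i with 2 ≤ i ≤ n−1, a_i is divisible by n! and by every prime in S. Then P_{a,0} has integer coefficients, and for every prime p such that p ∈ S or p divides n, the integer Δ_{a,1} is not divisible by p. -/

import Mathlib

open Polynomial

/-- `Q_a(x) = n (x - a₁/n)(x - a₂) ⋯ (x - a_{n-1})`, where the tuple
`(a₁, …, a_{n-1})` is given by the values `a 1, …, a (n-1)` of `a : ℕ → F`. -/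
noncomputable def Qa (F : Type) [Field F] (n : ℕ) (a : ℕ → F) : Polynomial F :=
  C (n : F) * (X - C (a 1 / (n : F))) * ∏ i ∈ Finset.Icc 2 (n - 1), (X - C (a i))

/-- `P_{a,b}`: the unique polynomial with derivative `Q_a` and constant coefficient `b`
(in characteristic zero). -/
noncomputable def Pab (F : Type) [Field F] (n : ℕ) (a : ℕ → F) (b : F) : Polynomial F :=
  C b + ∑ i ∈ Finset.range ((Qa F n a).natDegree + 1),
    C ((Qa F n a).coeff i / ((i : F) + 1)) * X ^ (i + 1)

/-- `Δ_{a,b} = z`: for some enumeration `r` of the complex roots of `P_{a,b}`,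
`∏_{i<j} (rᵢ - rⱼ)² = z`. -/
def HasDisc (n : ℕ) (a : ℕ → ℚ) (b : ℚ) (z : ℤ) : Prop :=
  ∃ r : Fin n → ℂ, (Pab ℚ n a b).map (algebraMap ℚ ℂ) = ∏ i, (X - C (r i)) ∧
    (∏ i : Fin n, ∏ j ∈ Finset.Ioi i, (r i - r j) ^ 2) = (z : ℂ)

/-- lower coefficients of a product of (X - c i) are divisible by d when all c i are -/
lemma prod_lowcoeff (s : Finset ℕ) (c : ℕ → ℤ) (d : ℤ) (h : ∀ i ∈ s, d ∣ c i) :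
    ∀ j < s.card, d ∣ (∏ i ∈ s, (X - C (c i))).coeff j := by
  classical
  induction s using Finset.cons_induction with
  | empty => intro j hj; simp at hj
  | cons i s' hi ih =>
    intro j hj
    rw [Finset.prod_cons, mul_comm]
    rcases j with _ | m
    · rw [Polynomial.mul_coeff_zero]
      have : (X - C (c i)).coeff 0 = -(c i) := by simp
      rw [this]
      exact Dvd.dvd.mul_left (dvd_neg.mpr (h i (Finset.mem_cons_self i s'))) _
    · rw [Polynomial.coeff_mul_X_sub_C]
      rw [Finset.card_cons] at hj
      refine dvd_sub (ih (fun k hk => h k (Finset.mem_cons_of_mem hk)) m (by omega)) ?_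
      exact Dvd.dvd.mul_left (h i (Finset.mem_cons_self i s')) _

noncomputable def Rz (n : ℕ) (a : ℕ → ℤ) : Polynomial ℤ :=
  ∏ i ∈ Finset.Icc 2 (n - 1), (X - C (a i))

noncomputable def Qz (n : ℕ) (a : ℕ → ℤ) : Polynomial ℤ :=
  (C (n : ℤ) * X - C (a 1)) * Rz n a

lemma Rz_monic (n : ℕ) (a : ℕ → ℤ) : (Rz n a).Monic :=
  monic_prod_of_monic _ _ (fun i _ => monic_X_sub_C (a i))

lemma Rz_natDegree (n : ℕ) (a : ℕ → ℤ) : (Rz n a).natDegree = n - 2 := by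
  rw [Rz, Polynomial.natDegree_prod _ _ (fun i _ => X_sub_C_ne_zero (a i))]
  rw [Finset.sum_congr rfl (fun i _ => natDegree_X_sub_C (a i))]
  simp [Nat.card_Icc]
  omega

lemma Rz_coeff_top (n : ℕ) (a : ℕ → ℤ) : (Rz n a).coeff (n - 2) = 1 := by
  have := (Rz_monic n a).coeff_natDegree
  rwa [Rz_natDegree] at this

lemma Rz_coeff_low (n : ℕ) (a : ℕ → ℤ) (d : ℤ) (h : ∀ i, 2 ≤ i → i ≤ n - 1 → d ∣ a i) :
    ∀ j < n - 2, d ∣ (Rz n a).coeff j := by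
  intro j hj
  refine prod_lowcoeff _ _ d (fun i hi => ?_) j ?_
  · rw [Finset.mem_Icc] at hi; exact h i hi.1 hi.2
  · rw [Nat.card_Icc]; omega

lemma Qz_coeff (n : ℕ) (a : ℕ → ℤ) (k : ℕ) :
    (Qz n a).coeff k =
      n * (if k = 0 then 0 else (Rz n a).coeff (k - 1)) - a 1 * (Rz n a).coeff k := by
  have : Qz n a = C (n : ℤ) * (X * Rz n a) - C (a 1) * Rz n a := by rw [Qz]; ring
  rw [this, Polynomial.coeff_sub, Polynomial.coeff_C_mul, Polynomial.coeff_C_mul]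
  rcases k with _ | m
  · simp
  · simp [Polynomial.coeff_X_mul]

section
variable (n : ℕ) (a : ℕ → ℤ)

lemma Rz_coeff_zero_of_gt (j : ℕ) (hj : n - 2 < j) : (Rz n a).coeff j = 0 :=
  Polynomial.coeff_eq_zero_of_natDegree_lt (by rw [Rz_natDegree]; exact hj)

lemma Qz_coeff_top (hn : 2 ≤ n) : (Qz n a).coeff (n - 1) = n := by
  rw [Qz_coeff]
  rw [if_neg (by omega), show n - 1 - 1 = n - 2 by omega, Rz_coeff_top,
    Rz_coeff_zero_of_gt n a (n-1) (by omega)]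
  ring

lemma lin_natDegree (hn : 2 ≤ n) : (C (n : ℤ) * X - C (a 1)).natDegree = 1 := by
  rw [sub_eq_add_neg, ← Polynomial.C_neg]
  exact natDegree_linear (by exact_mod_cast (by omega : n ≠ 0))

lemma Qz_natDegree (hn : 2 ≤ n) : (Qz n a).natDegree = n - 1 := by
  have h1 := lin_natDegree n a hn
  have hne : (C (n : ℤ) * X - C (a 1)) ≠ 0 := fun h => by rw [h] at h1; simp at h1
  rw [Qz, Polynomial.natDegree_mul hne (Rz_monic n a).ne_zero, h1, Rz_natDegree]
  omega

/-- the key divisibility allowing integration -/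
lemma Qz_coeff_dvd (hn : 2 ≤ n)
    (ha1' : ((n : ℤ) - 1) ∣ a 1)
    (hai : ∀ i, 2 ≤ i → i ≤ n - 1 → (n.factorial : ℤ) ∣ a i) :
    ∀ i < n, ((i : ℤ) + 1) ∣ (Qz n a).coeff i := by
  intro i hi
  rcases Nat.eq_zero_or_pos i with rfl | hpos
  · norm_num
  have hfac : ∀ j < n - 2, (n.factorial : ℤ) ∣ (Rz n a).coeff j := Rz_coeff_low n a _ hai
  rw [Qz_coeff, if_neg (by omega)]
  rcases eq_or_ne i (n-1) with rfl | htop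
  · rw [show n-1-1 = n-2 by omega, Rz_coeff_top,
      Rz_coeff_zero_of_gt n a (n-1) (by omega)]
    have hc : ((n - 1 : ℕ) : ℤ) + 1 = n := by
      have := Nat.cast_sub (by omega : 1 ≤ n) (R := ℤ); push_cast at this ⊢; omega
    rw [hc]
    exact ⟨1, by ring⟩
  rcases eq_or_ne i (n-2) with rfl | hmid
  · have hn3 : 3 ≤ n := by omega
    rw [Rz_coeff_top]
    have hc : ((n - 2 : ℕ) : ℤ) + 1 = (n : ℤ) - 1 := by
      have := Nat.cast_sub (by omega : 2 ≤ n) (R := ℤ); push_cast at this ⊢; omega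
    rw [hc]
    have hd : ((n : ℤ) - 1) ∣ (n.factorial : ℤ) := by
      have h2 : (n - 1) ∣ n.factorial := Nat.dvd_factorial (by omega) (by omega)
      have h3 : ((n - 1 : ℕ) : ℤ) = (n : ℤ) - 1 := by
        have := Nat.cast_sub (by omega : 1 ≤ n) (R := ℤ); push_cast at this ⊢; omega
      rw [← h3]; exact_mod_cast h2
    exact dvd_sub (Dvd.dvd.mul_left (hd.trans (hfac _ (by omega))) _)
      (by rw [mul_one]; exact ha1')
  · have hdvd1 : ((i : ℤ) + 1) ∣ (n.factorial : ℤ) := by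
      have : (i + 1) ∣ n.factorial := Nat.dvd_factorial (by omega) (by omega)
      exact_mod_cast this
    exact dvd_sub (Dvd.dvd.mul_left (hdvd1.trans (hfac _ (by omega))) _)
      (Dvd.dvd.mul_left (hdvd1.trans (hfac _ (by omega))) _)
end

noncomputable def zc (n : ℕ) (a : ℕ → ℤ) (i : ℕ) : ℤ := (Qz n a).coeff i / ((i : ℤ) + 1)
noncomputable def Pz (n : ℕ) (a : ℕ → ℤ) (b : ℤ) : Polynomial ℤ :=
  C b + ∑ i ∈ Finset.range n, C (zc n a i) * X ^ (i + 1)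

section
variable (n : ℕ) (a : ℕ → ℤ)

lemma zc_spec (h : ∀ i < n, ((i : ℤ) + 1) ∣ (Qz n a).coeff i) :
    ∀ i < n, ((i : ℤ) + 1) * zc n a i = (Qz n a).coeff i := fun i hi =>
  Int.mul_ediv_cancel' (h i hi)

lemma zc_top (hn : 2 ≤ n) : zc n a (n - 1) = 1 := by
  have hc : ((n - 1 : ℕ) : ℤ) + 1 = n := by
    have := Nat.cast_sub (by omega : 1 ≤ n) (R := ℤ); push_cast at this ⊢; omega
  rw [zc, hc, Qz_coeff_top n a hn]
  exact Int.ediv_self (by exact_mod_cast (by omega : n ≠ 0))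

lemma Qa_eq (hn : 2 ≤ n) :
    Qa ℚ n (fun i => (a i : ℚ)) = (Qz n a).map (Int.castRingHom ℚ) := by
  rw [Qa, Qz, Rz, Polynomial.map_mul, Polynomial.map_prod]
  have h1 : (n : ℚ) ≠ 0 := by exact_mod_cast (by omega : n ≠ 0)
  have key : C (n : ℚ) * (X - C ((a 1 : ℚ) / (n : ℚ))) =
      C (((n : ℤ) : ℚ)) * X - C (((a 1 : ℤ) : ℚ)) := by
    rw [mul_sub, ← C_mul, mul_div_cancel₀ _ h1]
    norm_num
  rw [key]
  simp only [Polynomial.map_sub, Polynomial.map_mul, map_C, map_X]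
  rfl

lemma Qa_natDegree (hn : 2 ≤ n) : (Qa ℚ n (fun i => (a i : ℚ))).natDegree = n - 1 := by
  rw [Qa_eq n a hn, natDegree_map_eq_of_injective Int.cast_injective, Qz_natDegree n a hn]

lemma Pab_eq (hn : 2 ≤ n) (h : ∀ i < n, ((i : ℤ) + 1) ∣ (Qz n a).coeff i) (b : ℤ) :
    Pab ℚ n (fun i => (a i : ℚ)) (b : ℚ) = (Pz n a b).map (Int.castRingHom ℚ) := by
  rw [Pab, Qa_natDegree n a hn, show n - 1 + 1 = n by omega, Pz, Polynomial.map_add,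
    Polynomial.map_sum, map_C]
  congr 1
  refine Finset.sum_congr rfl fun i hi => ?_
  rw [Finset.mem_range] at hi
  rw [Polynomial.map_mul, map_C, Polynomial.map_pow, map_X]
  congr 1
  rw [Qa_eq n a hn, Polynomial.coeff_map]
  have hcast : ((i : ℚ) + 1) * ((zc n a i : ℤ) : ℚ) = (((Qz n a).coeff i : ℤ) : ℚ) := by
    exact_mod_cast congrArg (fun t : ℤ => (t : ℚ)) (zc_spec n a h i hi)
  have hne : ((i : ℚ) + 1) ≠ 0 := by positivity
  congr 1
  show (((Qz n a).coeff i : ℤ) : ℚ) / ((i : ℚ) + 1) = ((zc n a i : ℤ) : ℚ)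
  rw [div_eq_iff hne, ← hcast]
  ring

lemma Pz_coeff_zero (b : ℤ) : (Pz n a b).coeff 0 = b := by
  rw [Pz, Polynomial.coeff_add, Polynomial.coeff_C]
  simp [Polynomial.coeff_X_pow]

lemma Pz_coeff_succ (b : ℤ) (m : ℕ) :
    (Pz n a b).coeff (m + 1) = if m < n then zc n a m else 0 := by
  rw [Pz, Polynomial.coeff_add, Polynomial.coeff_C, if_neg (by omega), zero_add,
    Polynomial.finset_sum_coeff]
  have hiff : ∀ i : ℕ, (m + 1 = i + 1) = (i = m) := fun i => by
    simp [eq_comm]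
  simp only [Polynomial.coeff_C_mul, Polynomial.coeff_X_pow, hiff, mul_ite, mul_one, mul_zero]
  rw [Finset.sum_ite_eq' (Finset.range n) m (zc n a)]
  simp [Finset.mem_range]

end

lemma Pab_derivative (F : Type) [Field F] [CharZero F] (n : ℕ) (a : ℕ → F) (b : F) :
    derivative (Pab F n a b) = Qa F n a := by
  rw [Pab, derivative_add, derivative_C, zero_add, derivative_sum]
  conv_rhs => rw [Polynomial.as_sum_range_C_mul_X_pow (Qa F n a)]
  refine Finset.sum_congr rfl fun i _ => ?_
  rw [derivative_C_mul, derivative_X_pow]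
  rw [show i + 1 - 1 = i from rfl, ← mul_assoc, ← C_mul]
  congr 2
  have hne : ((i : F) + 1) ≠ 0 := Nat.cast_add_one_ne_zero i
  push_cast
  field_simp

lemma exists_roots (n : ℕ) (P : Polynomial ℂ) (hm : P.Monic) (hd : P.natDegree = n) :
    ∃ r : Fin n → ℂ, P = ∏ i, (X - C (r i)) := by
  have hs : P.Splits := IsAlgClosed.splits P
  have hcard : P.roots.toList.length = n := by
    rw [Multiset.length_toList, (splits_iff_card_roots).mp hs, hd]
  refine ⟨fun i => P.roots.toList.get (Fin.cast hcard.symm i), ?_⟩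
  refine (hs.eq_prod_roots_of_monic hm).trans ?_
  conv_lhs => rw [← Multiset.coe_toList P.roots]
  rw [Multiset.map_coe, Multiset.prod_coe]
  have h2 : P.roots.toList.map (fun z => X - C z) =
      List.ofFn (fun j => X - C (P.roots.toList.get j)) := by
    conv_lhs => rw [← List.ofFn_get P.roots.toList, List.map_ofFn]
    rfl
  rw [h2, List.prod_ofFn]
  exact (Equiv.prod_comp (finCongr hcard.symm)
    (fun j => X - C (P.roots.toList.get j))).symm

lemma derivative_prod_X_sub_C {n : ℕ} (r : Fin n → ℂ) :
    derivative (∏ i, (X - C (r i))) =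
      ∑ i, ∏ j ∈ Finset.univ.erase i, (X - C (r j)) := by
  rw [Finset.prod_eq_multiset_prod, Polynomial.derivative_prod]
  simp only [derivative_sub, derivative_X, derivative_C, sub_zero, mul_one]
  rw [Finset.sum_eq_multiset_sum]
  congr 1

lemma eval_derivative_prod {n : ℕ} (r : Fin n → ℂ) (k : Fin n) :
    eval (r k) (derivative (∏ i, (X - C (r i)))) =
      ∏ j ∈ Finset.univ.erase k, (r k - r j) := by
  rw [derivative_prod_X_sub_C, eval_finset_sum]
  rw [Finset.sum_eq_single k]
  · rw [eval_prod]; exact Finset.prod_congr rfl fun j _ => by simp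
  · intro i _ hik
    rw [eval_prod]
    refine Finset.prod_eq_zero (Finset.mem_erase.mpr ⟨hik.symm, Finset.mem_univ k⟩) ?_
    simp
  · intro h; exact absurd (Finset.mem_univ k) h

lemma disc_id {n : ℕ} (r : Fin n → ℂ) :
    ∏ i, ∏ j ∈ Finset.Ioi i, (r i - r j) ^ 2
      = (-1) ^ (∑ i : Fin n, (Finset.Ioi i).card)
        * ∏ i, eval (r i) (derivative (∏ i, (X - C (r i)))) := by
  set K := ∑ i : Fin n, (Finset.Ioi i).card with hK
  have h1 : ∀ k : Fin n, eval (r k) (derivative (∏ i, (X - C (r i)))) =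
      ∏ j ∈ ({k}ᶜ : Finset (Fin n)), (r k - r j) := by
    intro k
    rw [eval_derivative_prod r k, Finset.compl_singleton]
  rw [Finset.prod_congr rfl fun k _ => h1 k]
  have h3 := Finset.prod_prod_Ioi_mul_eq_prod_prod_off_diag (fun j i : Fin n => r i - r j)
  beta_reduce at h3
  have h4 : (∏ k : Fin n, ∏ j ∈ ({k}ᶜ : Finset (Fin n)), (r k - r j))
      = ∏ i : Fin n, ∏ j ∈ Finset.Ioi i, (r i - r j) * (r j - r i) := by
    rw [h3]
  rw [h4]
  have h2 : ∀ i j : Fin n, (r i - r j) * (r j - r i) = (-1) * (r i - r j) ^ 2 := by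
    intro i j; ring
  rw [Finset.prod_congr rfl fun i _ => Finset.prod_congr rfl fun j _ => h2 i j]
  rw [Finset.prod_congr rfl fun i (_ : i ∈ Finset.univ) => Finset.prod_mul_distrib]
  rw [Finset.prod_mul_distrib]
  rw [Finset.prod_congr rfl fun i (_ : i ∈ Finset.univ) =>
    Finset.prod_const (b := (-1 : ℂ))]
  rw [Finset.prod_pow_eq_pow_sum, ← hK, ← mul_assoc, ← pow_add]
  rw [Even.neg_one_pow ⟨K, by ring⟩, one_mul]

noncomputable def Az (n : ℕ) (a : ℕ → ℤ) : ℤ :=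
  ∑ j ∈ Finset.range (n + 1), (Pz n a 1).coeff j * (a 1) ^ j * (n : ℤ) ^ (n - j)
noncomputable def dz (n : ℕ) (a : ℕ → ℤ) : ℤ :=
  (-1) ^ (∑ i : Fin n, (Finset.Ioi i).card) * ((-1) ^ n * Az n a) *
    ∏ k ∈ Finset.Icc 2 (n - 1), ((-1) ^ n * (Pz n a 1).eval (a k))

section
variable (n : ℕ) (a : ℕ → ℤ)

lemma Pz_coeff_top (hn : 2 ≤ n) (b : ℤ) : (Pz n a b).coeff n = 1 := by
  have : n = (n - 1) + 1 := by omega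
  rw [this, Pz_coeff_succ, if_pos (by omega), ← this, zc_top n a hn]

lemma Pz_natDegree (hn : 2 ≤ n) (b : ℤ) : (Pz n a b).natDegree = n := by
  refine le_antisymm (Polynomial.natDegree_le_iff_coeff_eq_zero.mpr fun N hN => ?_)
    (Polynomial.le_natDegree_of_ne_zero (by rw [Pz_coeff_top n a hn b]; norm_num))
  obtain ⟨m, rfl⟩ : ∃ m, N = m + 1 := ⟨N - 1, by omega⟩
  rw [Pz_coeff_succ, if_neg (by omega)]

lemma Pz_monic (hn : 2 ≤ n) (b : ℤ) : (Pz n a b).Monic := by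
  rw [Monic, Polynomial.leadingCoeff, Pz_natDegree n a hn b, Pz_coeff_top n a hn b]

lemma Pz_derivative (hn : 2 ≤ n) (h : ∀ i < n, ((i : ℤ) + 1) ∣ (Qz n a).coeff i) (b : ℤ) :
    derivative (Pz n a b) = Qz n a := by
  rw [Pz, derivative_add, derivative_C, zero_add, derivative_sum]
  conv_rhs => rw [Polynomial.as_sum_range_C_mul_X_pow (Qz n a)]
  rw [Qz_natDegree n a hn, show n - 1 + 1 = n by omega]
  refine Finset.sum_congr rfl fun i hi => ?_
  rw [Finset.mem_range] at hi
  rw [derivative_C_mul, derivative_X_pow, show i + 1 - 1 = i from rfl, ← mul_assoc, ← C_mul]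
  congr 2
  rw [← zc_spec n a h i hi]
  push_cast
  ring
end

lemma prod_neg' {ι : Type} (s : Finset ι) (f : ι → ℂ) :
    ∏ i ∈ s, -f i = (-1) ^ s.card * ∏ i ∈ s, f i := by
  rw [Finset.prod_congr rfl (fun i _ => neg_eq_neg_one_mul (f i)), Finset.prod_mul_distrib,
    Finset.prod_const]

section
variable (n : ℕ) (a : ℕ → ℤ)

lemma prod_sq_eq (hn : 2 ≤ n)
    (h : ∀ i < n, ((i : ℤ) + 1) ∣ (Qz n a).coeff i)
    (r : Fin n → ℂ)
    (hfact : (Pz n a 1).map (Int.castRingHom ℂ) = ∏ i, (X - C (r i))) :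
    ∏ i, ∏ j ∈ Finset.Ioi i, (r i - r j) ^ 2 = ((dz n a : ℤ) : ℂ) := by
  set φ := Int.castRingHom ℂ with hφ
  set Pc := (Pz n a 1).map φ with hPc
  have hnne : (n : ℂ) ≠ 0 := by exact_mod_cast (by omega : n ≠ 0)
  have hPcdeg : Pc.natDegree = n := by
    rw [hPc, natDegree_map_eq_of_injective Int.cast_injective, Pz_natDegree n a hn 1]
  have hder : derivative (∏ i, (X - C (r i))) = (Qz n a).map φ := by
    rw [← hfact, hPc, Polynomial.derivative_map, Pz_derivative n a hn h 1]
  rw [disc_id r, hder]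
  have hQc : (Qz n a).map φ =
      (C ((n : ℂ)) * X - C ((a 1 : ℂ))) *
        ∏ k ∈ Finset.Icc 2 (n - 1), (X - C ((a k : ℂ))) := by
    rw [Qz, Rz, Polynomial.map_mul, Polynomial.map_sub, Polynomial.map_mul, map_C, map_X,
      Polynomial.map_prod]
    simp
  have hevalP : ∀ c : ℂ, eval c Pc = ∏ i, (c - r i) := by
    intro c; rw [hfact, eval_prod]; simp
  have heval : ∀ i, eval (r i) ((Qz n a).map φ) =
      ((n : ℂ) * r i - (a 1 : ℂ)) * ∏ k ∈ Finset.Icc 2 (n - 1), (r i - (a k : ℂ)) := by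
    intro i
    rw [hQc]
    simp [eval_prod]
  rw [Finset.prod_congr rfl fun i (_ : i ∈ Finset.univ) => heval i, Finset.prod_mul_distrib]
  have hfirst : ∏ i, ((n : ℂ) * r i - (a 1 : ℂ))
      = (-1) ^ n * ((n : ℂ) ^ n * eval ((a 1 : ℂ) / n) Pc) := by
    have e1 : ∀ i, (n : ℂ) * r i - (a 1 : ℂ) = -((n : ℂ) * (((a 1 : ℂ) / n) - r i)) := by
      intro i; field_simp; ring
    rw [Finset.prod_congr rfl fun i (_ : i ∈ Finset.univ) => e1 i, prod_neg',
      Finset.prod_mul_distrib, Finset.prod_const, ← hevalP, Finset.card_univ,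
      Fintype.card_fin]
  have hsecond : ∏ i, ∏ k ∈ Finset.Icc 2 (n - 1), (r i - (a k : ℂ))
      = ∏ k ∈ Finset.Icc 2 (n - 1), ((-1) ^ n * eval ((a k : ℂ)) Pc) := by
    rw [Finset.prod_comm]
    refine Finset.prod_congr rfl fun k _ => ?_
    have e1 : ∀ i, r i - (a k : ℂ) = -((a k : ℂ) - r i) := fun i => by ring
    rw [Finset.prod_congr rfl fun i (_ : i ∈ Finset.univ) => e1 i, prod_neg', ← hevalP,
      Finset.card_univ, Fintype.card_fin]
  rw [hfirst, hsecond]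
  have hB : ∀ k : ℕ, eval ((a k : ℂ)) Pc = (((Pz n a 1).eval (a k) : ℤ) : ℂ) := by
    intro k
    rw [hPc, Polynomial.eval_map]
    exact Polynomial.eval₂_at_apply φ (a k)
  have hA : (n : ℂ) ^ n * eval ((a 1 : ℂ) / n) Pc = ((Az n a : ℤ) : ℂ) := by
    rw [eval_eq_sum_range, hPcdeg, Az]
    push_cast
    rw [Finset.mul_sum]
    refine Finset.sum_congr rfl fun j hj => ?_
    rw [Finset.mem_range] at hj
    have hpow : (n : ℂ) ^ (n - j) * (n : ℂ) ^ j = (n : ℂ) ^ n :=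
      pow_sub_mul_pow _ (by omega)
    have hc : Pc.coeff j = (((Pz n a 1).coeff j : ℤ) : ℂ) := by
      rw [hPc, Polynomial.coeff_map]; rfl
    rw [hc, div_pow]
    field_simp
    rw [← hpow]
    ring
  rw [hA, Finset.prod_congr rfl fun k _ => by rw [hB k], dz]
  push_cast
  ring
end

section
variable (n : ℕ) (a : ℕ → ℤ)

lemma dz_not_dvd (hn : 2 ≤ n) (S : Finset ℕ)
    (ha1 : Int.gcd (a 1) n = 1)
    (ha1'' : ∀ p ∈ S, ¬ p ∣ n → (p : ℤ) ∣ a 1)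
    (hai : ∀ i, 2 ≤ i → i ≤ n - 1 → (n.factorial : ℤ) ∣ a i)
    (hai' : ∀ i, 2 ≤ i → i ≤ n - 1 → ∀ p ∈ S, (p : ℤ) ∣ a i)
    (p : ℕ) (hp : p.Prime) (hpS : p ∈ S ∨ p ∣ n) : ¬ (p : ℤ) ∣ dz n a := by
  haveI := Fact.mk hp
  suffices hne : ((dz n a : ℤ) : ZMod p) ≠ 0 by
    intro hd
    exact hne ((ZMod.intCast_zmod_eq_zero_iff_dvd _ p).mpr hd)
  have hone : (-1 : ZMod p) ≠ 0 := neg_ne_zero.mpr one_ne_zero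
  -- the a_k are ≡ 0 mod p
  have hak : ∀ k, 2 ≤ k → k ≤ n - 1 → ((a k : ZMod p)) = 0 := by
    intro k hk1 hk2
    refine (ZMod.intCast_zmod_eq_zero_iff_dvd _ p).mpr ?_
    rcases hpS with hpS | hpn
    · exact hai' k hk1 hk2 p hpS
    · have h1 : (p : ℤ) ∣ (n.factorial : ℤ) := by
        exact_mod_cast Int.natCast_dvd_natCast.mpr
          (Nat.dvd_factorial hp.pos (Nat.le_of_dvd (by omega) hpn))
      exact h1.trans (hai k hk1 hk2)
  have hAz : ((Az n a : ℤ) : ZMod p) ≠ 0 := by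
    rw [Az]
    push_cast
    by_cases hpn : p ∣ n
    · have hn0 : ((n : ℕ) : ZMod p) = 0 := (ZMod.natCast_eq_zero_iff n p).mpr hpn
      have ha1p : ((a 1 : ZMod p)) ≠ 0 := by
        intro h0
        have h1 : (p : ℤ) ∣ a 1 := (ZMod.intCast_zmod_eq_zero_iff_dvd _ p).mp h0
        have h2 : (p : ℤ) ∣ ((n : ℕ) : ℤ) := Int.natCast_dvd_natCast.mpr hpn
        have h3 := Int.dvd_coe_gcd h1 h2
        rw [ha1] at h3
        have := Int.le_of_dvd one_pos (by exact_mod_cast h3 : (p : ℤ) ∣ 1)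
        have := hp.two_le
        omega
      rw [Finset.sum_eq_single n]
      · rw [Pz_coeff_top n a hn 1, Nat.sub_self, pow_zero]
        push_cast
        simpa using pow_ne_zero n ha1p
      · intro j hj hjn
        rw [Finset.mem_range] at hj
        rw [hn0, zero_pow (by omega : n - j ≠ 0), mul_zero]
      · intro hmem
        exact absurd (Finset.mem_range.mpr (by omega)) hmem
    · have hpn' : p ∈ S := hpS.resolve_right hpn
      have ha10 : ((a 1 : ZMod p)) = 0 :=
        (ZMod.intCast_zmod_eq_zero_iff_dvd _ p).mpr (ha1'' p hpn' hpn)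
      have hnne : ((n : ℕ) : ZMod p) ≠ 0 := by
        intro h0
        exact hpn ((ZMod.natCast_eq_zero_iff n p).mp h0)
      rw [Finset.sum_eq_single 0]
      · rw [Pz_coeff_zero, pow_zero, Nat.sub_zero]
        push_cast
        simpa using pow_ne_zero n hnne
      · intro j hj hj0
        rw [ha10, zero_pow hj0, mul_zero, zero_mul]
      · intro hmem
        exact absurd (Finset.mem_range.mpr (by omega)) hmem
  have hBk : ∀ k ∈ Finset.Icc 2 (n - 1), (((Pz n a 1).eval (a k) : ℤ) : ZMod p) ≠ 0 := by
    intro k hk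
    rw [Finset.mem_Icc] at hk
    have : (((Pz n a 1).eval (a k) : ℤ) : ZMod p)
        = eval ((a k : ZMod p)) ((Pz n a 1).map (Int.castRingHom (ZMod p))) := by
      rw [Polynomial.eval_map]
      exact (Polynomial.eval₂_at_apply (Int.castRingHom (ZMod p)) (a k)).symm
    rw [this, hak k hk.1 hk.2, ← Polynomial.coeff_zero_eq_eval_zero, Polynomial.coeff_map,
      Pz_coeff_zero]
    simpa using one_ne_zero
  rw [dz]
  push_cast
  refine mul_ne_zero (mul_ne_zero (pow_ne_zero _ hone) (mul_ne_zero (pow_ne_zero _ hone) hAz)) ?_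
  rw [Finset.prod_ne_zero_iff]
  intro k hk
  exact mul_ne_zero (pow_ne_zero _ hone) (hBk k hk)
end

theorem integral_coeffs_and_disc_coprime (n : ℕ) (hn : 2 ≤ n) (S : Finset ℕ)
    (hS : ∀ p ∈ S, p.Prime) (a : ℕ → ℤ)
    (ha1 : Int.gcd (a 1) n = 1)
    (ha1' : ((n : ℤ) - 1) ∣ a 1)
    (ha1'' : ∀ p ∈ S, ¬ p ∣ n → (p : ℤ) ∣ a 1)
    (hai : ∀ i, 2 ≤ i → i ≤ n - 1 → (n.factorial : ℤ) ∣ a i)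
    (hai' : ∀ i, 2 ≤ i → i ≤ n - 1 → ∀ p ∈ S, (p : ℤ) ∣ a i) :
    (∀ m : ℕ, ∃ z : ℤ, (Pab ℚ n (fun i => (a i : ℚ)) 0).coeff m = (z : ℚ)) ∧
    ∃ z : ℤ, HasDisc n (fun i => (a i : ℚ)) 1 z ∧
      ∀ p : ℕ, p.Prime → (p ∈ S ∨ p ∣ n) → ¬ (p : ℤ) ∣ z := by
  have h : ∀ i < n, ((i : ℤ) + 1) ∣ (Qz n a).coeff i := Qz_coeff_dvd n a hn ha1' hai
  constructor
  · intro m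
    refine ⟨(Pz n a 0).coeff m, ?_⟩
    have h0 := Pab_eq n a hn h 0
    rw [show ((0 : ℤ) : ℚ) = (0 : ℚ) by norm_num] at h0
    rw [h0, Polynomial.coeff_map]
    rfl
  · refine ⟨dz n a, ?_, fun p hp hpS => dz_not_dvd n a hn S ha1 ha1'' hai hai' p hp hpS⟩
    obtain ⟨r, hfact⟩ := exists_roots n ((Pz n a 1).map (Int.castRingHom ℂ))
      ((Pz_monic n a hn 1).map _)
      (by rw [natDegree_map_eq_of_injective Int.cast_injective, Pz_natDegree n a hn 1])
    refine ⟨r, ?_, prod_sq_eq n a hn h r hfact⟩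
    have hPab := Pab_eq n a hn h 1
    rw [show ((1 : ℤ) : ℚ) = (1 : ℚ) by norm_num] at hPab
    rw [hPab, Polynomial.map_map,
      show (algebraMap ℚ ℂ).comp (Int.castRingHom ℚ) = Int.castRingHom ℂ from
        RingHom.ext_int _ _]
    exact hfact
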